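/- Let p be a probability vector on Fin r with p i > 0 for all i. Then the Havrda–Charvat generalized entropy H_β(p) = (1 - ∑ i, (p i)^β)/(1 - 2^(1-β)), viewed as a function of the real parameter β, tends to the base-2 Shannon entropy -∑ i, (p i) · logb 2 (p i) as β tends to 1 within the set {β : β ≠ 1}. -/

import Mathlib

/-- The Havrda–Charvat generalized entropy of order `β` of a finitely
supported probability vector `p`. -/
noncomputable def havrdaCharvat {α : Type*} [Fintype α] (β : ℝ) (p : α → ℝ) : ℝ :=
  (1 / (1 - (2 : ℝ) ^ (1 - β))) * (1 - ∑ i, (p i) ^ β)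

theorem havrdaCharvat_tendsto_shannon {r : ℕ} (p : Fin r → ℝ)
    (hp : ∀ i, 0 < p i) (hp1 : ∑ i, p i = 1) :
    Filter.Tendsto (fun β : ℝ => havrdaCharvat β p)
      (nhdsWithin 1 {β : ℝ | β ≠ 1})
      (nhds (-∑ i, p i * Real.logb 2 (p i))) := by
  set f : ℝ → ℝ := fun β => 1 - ∑ i, (p i) ^ β with hfdef
  set g : ℝ → ℝ := fun β => 1 - (2 : ℝ) ^ (1 - β) with hgdef
  have hf1 : f 1 = 0 := by simp [hfdef, Real.rpow_one, hp1]
  have hg1 : g 1 = 0 := by simp [hgdef]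
  have hfd : HasDerivAt f (-∑ i, p i * Real.log (p i)) 1 := by
    have hsum : HasDerivAt (fun β : ℝ => ∑ i, (p i) ^ β)
        (∑ i, p i * Real.log (p i)) 1 := by
      have : ∀ i ∈ Finset.univ, HasDerivAt (fun β : ℝ => (p i) ^ β)
          (p i * Real.log (p i)) 1 := by
        intro i _
        have := (hasDerivAt_const (1 : ℝ) (p i)).rpow (hasDerivAt_id 1) (hp i)
        simpa [Real.rpow_one] using this
      simpa using HasDerivAt.fun_sum this
    simpa using (hasDerivAt_const (1 : ℝ) (1 : ℝ)).fun_sub hsum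
  have hgd : HasDerivAt g (Real.log 2) 1 := by
    have h2 : HasDerivAt (fun β : ℝ => (2 : ℝ) ^ (1 - β)) (-Real.log 2) 1 := by
      have hinner : HasDerivAt (fun β : ℝ => 1 - β) (-1 : ℝ) 1 := by
        simpa using (hasDerivAt_const (1 : ℝ) (1 : ℝ)).fun_sub (hasDerivAt_id 1)
      have := (hasDerivAt_const (1 : ℝ) (2 : ℝ)).rpow hinner (by norm_num)
      simpa using this
    simpa using (hasDerivAt_const (1 : ℝ) (1 : ℝ)).fun_sub h2
  have hlog2 : Real.log 2 ≠ 0 := by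
    rw [Real.log_ne_zero]; norm_num
  have h1 := hasDerivAt_iff_tendsto_slope.mp hfd
  have h2 := hasDerivAt_iff_tendsto_slope.mp hgd
  have hdiv := h1.div h2 hlog2
  have hset : ({β : ℝ | β ≠ 1} : Set ℝ) = {(1 : ℝ)}ᶜ := by
    ext x; simp
  rw [hset]
  have heq : ∀ β ∈ ({(1 : ℝ)}ᶜ : Set ℝ),
      slope f 1 β / slope g 1 β = havrdaCharvat β p := by
    intro β hβ
    have hβ1 : β - 1 ≠ 0 := sub_ne_zero.mpr (by simpa using hβ)
    rw [slope_def_field, slope_def_field, hf1, hg1, sub_zero, sub_zero,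
      div_div_div_cancel_right₀ hβ1]
    rw [havrdaCharvat, one_div, div_eq_inv_mul]
  have hval : (-∑ i, p i * Real.log (p i)) / Real.log 2
      = -∑ i, p i * Real.logb 2 (p i) := by
    rw [neg_div, Finset.sum_div]
    congr 1
    refine Finset.sum_congr rfl fun i _ => ?_
    rw [Real.logb, mul_div_assoc]
  rw [← hval]
  exact hdiv.congr' (eventually_nhdsWithin_of_forall heq)
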